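/- Let x ∈ ℝ^E satisfy x(δ(u))=1 for all u∈V, x ≥ 0, and let A⁻, A⁺ be disjoint subsets of a set S ⊆ V such that every support edge of x inside S with an endpoint in A⁻ has its other endpoint in A⁺, and x(δ(S))=1. Then |A⁻| ≤ x(δ(A⁻, V∖S)) + |A⁺| ≤ 1 + |A⁺|. Consequently, if |A⁻| = 1 + |A⁺|, then x(δ(A⁻, V∖S)) = 1, i.e., all of x's flow leaving S comes from A⁻. -/

import Mathlib

open Finset

open Classical in
lemma sum_card_mul_aux
    {V : Type*} [Fintype V] [DecidableEq V] (G : SimpleGraph V) [DecidableRel G.Adj]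
    (x : Sym2 V → ℝ) (hxdeg : ∀ v : V, ∑ e ∈ G.incidenceFinset v, x e = 1)
    (A : Finset V) :
    ∑ e ∈ G.edgeFinset, ((A.filter (fun u => u ∈ e)).card : ℝ) * x e = A.card := by
  calc ∑ e ∈ G.edgeFinset, ((A.filter (fun u => u ∈ e)).card : ℝ) * x e
      = ∑ e ∈ G.edgeFinset, ∑ u ∈ A, if u ∈ e then x e else 0 := by
        refine Finset.sum_congr rfl fun e _ => ?_
        rw [← Finset.sum_filter, Finset.sum_const, nsmul_eq_mul]
    _ = ∑ u ∈ A, ∑ e ∈ G.edgeFinset, if u ∈ e then x e else 0 := Finset.sum_comm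
    _ = ∑ u ∈ A, ∑ e ∈ G.edgeFinset.filter (fun e => u ∈ e), x e := by
        simp [Finset.sum_filter]
    _ = ∑ u ∈ A, (1:ℝ) := by
        refine Finset.sum_congr rfl fun u _ => ?_
        rw [← G.incidenceFinset_eq_filter u, hxdeg u]
    _ = A.card := by simp

open Classical in
lemma card_filter_mem_sym2 {V : Type*} [DecidableEq V] (A : Finset V) (a b : V) (hab : a ≠ b) :
    ((A.filter (fun u => u ∈ s(a,b))).card : ℝ)
      = (if a ∈ A then (1:ℝ) else 0) + (if b ∈ A then (1:ℝ) else 0) := by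
  simp only [Sym2.mem_iff]
  rw [Finset.filter_or, Finset.filter_eq', Finset.filter_eq']
  by_cases ha : a ∈ A <;> by_cases hb : b ∈ A <;> simp [ha, hb]
  rw [Finset.card_pair hab]
  norm_num


open Classical in
/-- let `x` be a fractional perfect matching, `A⁻, A⁺` disjoint
subsets of `S ⊆ V` such that every support edge of `x` inside `S` with an endpoint
in `A⁻` has its other endpoint in `A⁺`, and `x(δ(S)) = 1`.  Then
`|A⁻| ≤ x(δ(A⁻, V∖S)) + |A⁺| ≤ 1 + |A⁺|`; consequently, if `|A⁻| = 1 + |A⁺|` then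
`x(δ(A⁻, V∖S)) = 1`. -/
theorem A_minus_counting
    {V : Type*} [Fintype V] [DecidableEq V] (G : SimpleGraph V) [DecidableRel G.Adj]
    (x : Sym2 V → ℝ)
    (hx0 : ∀ e, 0 ≤ x e) (hxsupp : ∀ e, e ∉ G.edgeSet → x e = 0)
    (hxdeg : ∀ v : V, ∑ e ∈ G.incidenceFinset v, x e = 1)
    (S Aminus Aplus : Finset V)
    (hAm : Aminus ⊆ S) (hAp : Aplus ⊆ S) (hdisj : Disjoint Aminus Aplus)
    (hinside : ∀ u v : V, G.Adj u v → 0 < x s(u, v) →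
      u ∈ Aminus → v ∈ S → v ∈ Aplus)
    (hδS : ∑ e ∈ G.edgeFinset.filter
        (fun e => ∃ a b : V, e = s(a, b) ∧ a ∈ S ∧ b ∉ S), x e = 1) :
    ((Aminus.card : ℝ) ≤
      (∑ e ∈ G.edgeFinset.filter
          (fun e => ∃ a b : V, e = s(a, b) ∧ a ∈ Aminus ∧ b ∉ S), x e)
        + (Aplus.card : ℝ)) ∧
    ((∑ e ∈ G.edgeFinset.filter
          (fun e => ∃ a b : V, e = s(a, b) ∧ a ∈ Aminus ∧ b ∉ S), x e)
        + (Aplus.card : ℝ) ≤ 1 + (Aplus.card : ℝ)) ∧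
    ((Aminus.card : ℝ) = 1 + (Aplus.card : ℝ) →
      ∑ e ∈ G.edgeFinset.filter
          (fun e => ∃ a b : V, e = s(a, b) ∧ a ∈ Aminus ∧ b ∉ S), x e = 1) := by
  set f := ∑ e ∈ G.edgeFinset.filter
      (fun e => ∃ a b : V, e = s(a, b) ∧ a ∈ Aminus ∧ b ∉ S), x e with hf
  have hkey : ∀ e ∈ G.edgeFinset,
      ((Aminus.filter (fun u => u ∈ e)).card : ℝ) * x e ≤
        (if (∃ a b : V, e = s(a, b) ∧ a ∈ Aminus ∧ b ∉ S) then x e else 0)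
          + ((Aplus.filter (fun u => u ∈ e)).card : ℝ) * x e := by
    intro e he
    induction e using Sym2.ind with
    | _ a b =>
      have hadj : G.Adj a b := by
        rwa [SimpleGraph.mem_edgeFinset, SimpleGraph.mem_edgeSet] at he
      have hab : a ≠ b := hadj.ne
      rw [card_filter_mem_sym2 Aminus a b hab, card_filter_mem_sym2 Aplus a b hab]
      rcases le_or_gt (x s(a,b)) 0 with hx | hx
      · have hx' : x s(a,b) = 0 := le_antisymm hx (hx0 _)
        split_ifs <;> simp [hx']
      · by_cases ham : a ∈ Aminus
        · by_cases hbS : b ∈ S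
          · have hbp : b ∈ Aplus := hinside a b hadj hx ham hbS
            have hbm : b ∉ Aminus := Finset.disjoint_right.mp hdisj hbp
            simp only [ham, hbm, hbp, if_true, if_false]
            split_ifs <;> nlinarith [hx.le]
          · have hPe : (∃ a' b' : V, s(a,b) = s(a', b') ∧ a' ∈ Aminus ∧ b' ∉ S) :=
              ⟨a, b, rfl, ham, hbS⟩
            have hbm : b ∉ Aminus := fun h => hbS (hAm h)
            have hbp : b ∉ Aplus := fun h => hbS (hAp h)
            simp only [ham, hbm, hbp, hPe, if_true, if_false]
            split_ifs <;> nlinarith [hx.le]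
        · by_cases hbm : b ∈ Aminus
          · have hx' : 0 < x s(b,a) := by rwa [Sym2.eq_swap]
            by_cases haS : a ∈ S
            · have hap : a ∈ Aplus := hinside b a hadj.symm hx' hbm haS
              simp only [ham, hbm, hap, if_true, if_false]
              split_ifs <;> nlinarith [hx.le]
            · have hPe : (∃ a' b' : V, s(a,b) = s(a', b') ∧ a' ∈ Aminus ∧ b' ∉ S) :=
                ⟨b, a, Sym2.eq_swap.symm, hbm, haS⟩
              have hap : a ∉ Aplus := fun h => haS (hAp h)
              simp only [ham, hbm, hap, hPe, if_true, if_false]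
              split_ifs <;> nlinarith [hx.le]
          · simp only [ham, hbm, if_false]
            split_ifs <;> nlinarith [hx.le]
  have h1 : (Aminus.card : ℝ) ≤ f + Aplus.card := by
    calc (Aminus.card : ℝ)
        = ∑ e ∈ G.edgeFinset, ((Aminus.filter (fun u => u ∈ e)).card : ℝ) * x e :=
          (sum_card_mul_aux G x hxdeg Aminus).symm
      _ ≤ ∑ e ∈ G.edgeFinset,
            ((if (∃ a b : V, e = s(a, b) ∧ a ∈ Aminus ∧ b ∉ S) then x e else 0)
              + ((Aplus.filter (fun u => u ∈ e)).card : ℝ) * x e) :=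
          Finset.sum_le_sum hkey
      _ = f + Aplus.card := by
          rw [Finset.sum_add_distrib, ← Finset.sum_filter,
            sum_card_mul_aux G x hxdeg Aplus]
  have h2 : f ≤ 1 := by
    rw [← hδS, hf]
    apply Finset.sum_le_sum_of_subset_of_nonneg
    · intro e he
      simp only [Finset.mem_filter] at he ⊢
      obtain ⟨he1, a, b, rfl, ha, hb⟩ := he
      exact ⟨he1, a, b, rfl, hAm ha, hb⟩
    · intros; exact hx0 _
  exact ⟨h1, by linarith, fun h => le_antisymm h2 (by linarith)⟩
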